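/- Let A be an n×n complex matrix of index k, let m ≥ 1 be an integer, and let l be an integer with l ≥ k. Then A^{#_m} = A^l (A^{l+m+1})† A^m P_{A^m}. -/
import Mathlib

open Matrix

/-- `X` is the Moore–Penrose inverse of `A` (four Penrose equations). -/
def MoorePenroseOf {n : ℕ} (A X : Matrix (Fin n) (Fin n) ℂ) : Prop :=
  A * X * A = A ∧ X * A * X = X ∧ (A * X)ᴴ = A * X ∧ (X * A)ᴴ = X * A

/-- Column space of a square complex matrix. -/
noncomputable def colSpace {n : ℕ} (A : Matrix (Fin n) (Fin n) ℂ) : Submodule ℂ (Fin n → ℂ) :=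
  LinearMap.range A.mulVecLin

/-- Null space of a square complex matrix. -/
noncomputable def nullSpace {n : ℕ} (A : Matrix (Fin n) (Fin n) ℂ) : Submodule ℂ (Fin n → ℂ) :=
  LinearMap.ker A.mulVecLin

/-- `k` is the index of `A`: the smallest nonnegative integer with
`rank(A^k) = rank(A^(k+1))`. -/
def HasIndex {n : ℕ} (A : Matrix (Fin n) (Fin n) ℂ) (k : ℕ) : Prop :=
  (A ^ k).rank = (A ^ (k + 1)).rank ∧ ∀ j < k, (A ^ j).rank ≠ (A ^ (j + 1)).rank

/-- `X` is the core-EP inverse of `A` (where `k = Ind(A)`): `XAX = X` and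
`R(X) = R(Xᴴ) = R(A^k)`. -/
def IsCoreEP {n : ℕ} (A X : Matrix (Fin n) (Fin n) ℂ) (k : ℕ) : Prop :=
  X * A * X = X ∧ colSpace X = colSpace (A ^ k) ∧ colSpace Xᴴ = colSpace (A ^ k)

private lemma ext_of_mulVec' {n : ℕ} {M N : Matrix (Fin n) (Fin n) ℂ}
    (h : ∀ v, M *ᵥ v = N *ᵥ v) : M = N := by
  ext i j
  have := congrFun (h (Pi.single j 1)) i
  simpa using this

private lemma fix_of_colSpace_le' {n : ℕ} {Q M N : Matrix (Fin n) (Fin n) ℂ}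
    (hQM : Q * M = M) (hle : colSpace N ≤ colSpace M) : Q * N = N := by
  apply ext_of_mulVec'
  intro v
  have hmem : N *ᵥ v ∈ colSpace M := hle ⟨v, by simp [Matrix.mulVecLin_apply]⟩
  obtain ⟨w, hw⟩ := hmem
  simp only [Matrix.mulVecLin_apply] at hw
  rw [← Matrix.mulVec_mulVec, ← hw, Matrix.mulVec_mulVec, hQM, hw]

private lemma colSpace_mul_le' {n : ℕ} (M N : Matrix (Fin n) (Fin n) ℂ) :
    colSpace (M * N) ≤ colSpace M := by
  unfold colSpace
  rw [Matrix.mulVecLin_mul]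
  exact LinearMap.range_comp_le_range _ _

private lemma colSpace_mul' {n : ℕ} (M N : Matrix (Fin n) (Fin n) ℂ) :
    colSpace (M * N) = Submodule.map M.mulVecLin (colSpace N) := by
  unfold colSpace
  rw [Matrix.mulVecLin_mul, LinearMap.range_comp]

/-- for `l ≥ k`, `A^{#_m} = A^l (A^{l+m+1})† A^m P_{A^m}`. -/
theorem stmt_8 {n k m l : ℕ} (hm : 1 ≤ m) (hl : k ≤ l)
    (A CEP AmDag B : Matrix (Fin n) (Fin n) ℂ)
    (hInd : HasIndex A k)
    (hCEP : IsCoreEP A CEP k)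
    (hMPm : MoorePenroseOf (A ^ m) AmDag)
    (hMPB : MoorePenroseOf (A ^ (l + m + 1)) B) :
    CEP ^ (m + 1) * A ^ m * (A ^ m * AmDag) =
      A ^ l * B * A ^ m * (A ^ m * AmDag) := by
  obtain ⟨hXAX, hRX, hRXH⟩ := hCEP
  obtain ⟨hB1, hB2, hB3, hB4⟩ := hMPB
  -- column spaces of powers stabilize from index k on
  have hbase : colSpace (A ^ (k+1)) = colSpace (A ^ k) := by
    refine Submodule.eq_of_le_of_finrank_eq ?_ ?_
    · rw [pow_succ]; exact colSpace_mul_le' _ _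
    · exact hInd.1.symm
  have hcol : ∀ j, k ≤ j → colSpace (A ^ j) = colSpace (A ^ k) := by
    intro j hj
    induction j, hj using Nat.le_induction with
    | base => rfl
    | succ j hj ih =>
      rw [pow_succ' A j, colSpace_mul', ih, ← colSpace_mul', ← pow_succ', hbase]
  -- CEP * A ^ (k+1) = A ^ k
  have hXAk : CEP * A * A ^ k = A ^ k :=
    fix_of_colSpace_le' hXAX (le_of_eq hRX.symm)
  have hXk1 : CEP * A ^ (k+1) = A ^ k := by
    rw [pow_succ', ← mul_assoc]; exact hXAk
  have hXpow : ∀ j, k ≤ j → CEP * A ^ (j+1) = A ^ j := by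
    intro j hj
    obtain ⟨t, rfl⟩ := Nat.exists_eq_add_of_le hj
    have hsplit : A ^ (k + t + 1) = A ^ (k+1) * A ^ t := by
      rw [← pow_add]; congr 1; omega
    rw [hsplit, ← mul_assoc, hXk1, ← pow_add]
  have hchain : ∀ i, CEP ^ i * A ^ (l + i) = A ^ l := by
    intro i
    induction i with
    | zero => simp
    | succ i ih =>
      rw [pow_succ, mul_assoc]
      have h' : CEP * A ^ (l + (i+1)) = A ^ (l+i) :=
        hXpow (l+i) (le_trans hl (Nat.le_add_right _ _))
      rw [h', ih]
  have h1 : CEP ^ (m+1) * A ^ (l+m+1) = A ^ l := by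
    have := hchain (m+1)
    rwa [show l + (m+1) = l + m + 1 from by omega] at this
  -- CEP absorbs the projector Q = A^(l+m+1) * B
  have hQX : A ^ (l+m+1) * B * CEPᴴ = CEPᴴ := by
    refine fix_of_colSpace_le' hB1 ?_
    rw [hRXH, hcol (l+m+1) (by omega)]
  have hXQ : CEP * (A ^ (l+m+1) * B) = CEP := by
    have h := congrArg Matrix.conjTranspose hQX
    rw [Matrix.conjTranspose_mul, Matrix.conjTranspose_conjTranspose, hB3] at h
    exact h
  have h2 : CEP ^ (m+1) * (A ^ (l+m+1) * B) = CEP ^ (m+1) := by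
    rw [pow_succ, mul_assoc, hXQ]
  calc CEP ^ (m + 1) * A ^ m * (A ^ m * AmDag)
      = (CEP ^ (m+1) * (A ^ (l+m+1) * B)) * A ^ m * (A ^ m * AmDag) := by rw [h2]
    _ = (CEP ^ (m+1) * A ^ (l+m+1)) * B * A ^ m * (A ^ m * AmDag) := by
        simp only [mul_assoc]
    _ = A ^ l * B * A ^ m * (A ^ m * AmDag) := by rw [h1]
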